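/- Let (Ω, F, P) be a probability space and let E, E_1, E_2, ... be sub-σ-fields such that the conditional expectation operators satisfy E[f | E_n] → E[f | E] in L² for every f ∈ L². Let f ∈ L_0(Ω, F, P; X) for a Polish space X. Then the conditional distributions P_{f | E_n} converge to P_{f | E} in L_0(Ω, F, P; Prob(X)). -/

import Mathlib

set_option linter.unusedSectionVars false
set_option maxHeartbeats 1000000

open MeasureTheory Filter Metric Set
open scoped NNReal ENNReal

namespace CondDistribProofAux

variable {X : Type*} [MetricSpace X]

lemma continuous_finset_sup_nnreal {ι : Type*} (t : Finset ι) (g : ι → X → ℝ≥0)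
    (hg : ∀ i, Continuous (g i)) : Continuous fun x => t.sup fun i => g i x := by
  classical
  induction t using Finset.induction_on with
  | empty => simp only [Finset.sup_empty]; exact continuous_const
  | insert _ _ h ih =>
      simp only [Finset.sup_insert]
      exact (hg _).sup ih

/-- The test functions: `x ↦ min (ε/8) (max_{i ∈ t} (ε/4 - dist x (u i))⁺)`. -/
noncomputable def testFn [MeasurableSpace X] (u : ℕ → X) (ε : ℝ) (t : Finset ℕ) :
    BoundedContinuousFunction X ℝ :=
  BoundedContinuousFunction.ofNormedAddCommGroup
    (fun x => min (ε/8) ((t.sup fun i => Real.toNNReal (ε/4 - dist x (u i)) : ℝ≥0) : ℝ))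
    (by
      apply continuous_const.min
      exact NNReal.continuous_coe.comp <| continuous_finset_sup_nnreal t _
        fun i => continuous_real_toNNReal.comp (continuous_const.sub (continuous_id.dist continuous_const)))
    (|ε/8|)
    (by
      intro x
      rw [Real.norm_eq_abs, abs_le]
      constructor
      · show -|ε/8| ≤ min (ε/8) ((t.sup fun i => Real.toNNReal (ε/4 - dist x (u i)) : ℝ≥0) : ℝ)
        rcases le_total ((t.sup fun i => Real.toNNReal (ε/4 - dist x (u i)) : ℝ≥0) : ℝ) (ε/8)
          with h | h
        · rw [min_eq_right h]
          exact le_trans (neg_nonpos_of_nonneg (abs_nonneg _)) (NNReal.coe_nonneg _)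
        · rw [min_eq_left h]
          exact neg_abs_le _
      · exact le_trans (min_le_left _ _) (le_abs_self _))

variable [MeasurableSpace X]

lemma testFn_apply (u : ℕ → X) (ε : ℝ) (t : Finset ℕ) (x : X) :
    testFn u ε t x
      = min (ε/8) ((t.sup fun i => Real.toNNReal (ε/4 - dist x (u i)) : ℝ≥0) : ℝ) := rfl

lemma testFn_nonneg (u : ℕ → X) {ε : ℝ} (hε : 0 ≤ ε) (t : Finset ℕ) (x : X) :
    0 ≤ testFn u ε t x := by
  rw [testFn_apply]
  exact le_min (by positivity) (NNReal.coe_nonneg _)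

lemma testFn_le (u : ℕ → X) (ε : ℝ) (t : Finset ℕ) (x : X) :
    testFn u ε t x ≤ ε/8 := min_le_left _ _

lemma testFn_ge (u : ℕ → X) {ε : ℝ} (hε : 0 < ε) (t : Finset ℕ) {x : X} {i : ℕ}
    (hi : i ∈ t) (hd : dist x (u i) ≤ ε/16) : ε/8 ≤ testFn u ε t x := by
  rw [testFn_apply]
  refine le_min le_rfl ?_
  have h1 : Real.toNNReal (ε/4 - dist x (u i)) ≤ t.sup fun i => Real.toNNReal (ε/4 - dist x (u i)) :=
    Finset.le_sup (f := fun i => Real.toNNReal (ε/4 - dist x (u i))) hi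
  have h2 : (ε/8 : ℝ) ≤ (Real.toNNReal (ε/4 - dist x (u i)) : ℝ) := by
    rw [Real.coe_toNNReal _ (by linarith)]
    linarith
  exact le_trans h2 (by exact_mod_cast h1)

lemma testFn_eq_zero (u : ℕ → X) {ε : ℝ} (hε : 0 ≤ ε) (t : Finset ℕ) {x : X}
    (h : ∀ i ∈ t, ε/4 ≤ dist x (u i)) : testFn u ε t x = 0 := by
  rw [testFn_apply]
  have hsup : (t.sup fun i => Real.toNNReal (ε/4 - dist x (u i))) = 0 := by
    refine le_antisymm (Finset.sup_le fun i hi => le_of_eq ?_) zero_le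
    rw [Real.toNNReal_eq_zero]
    linarith [h i hi]
  rw [hsup]
  simp only [NNReal.coe_zero]
  exact min_eq_right (by positivity)


variable [OpensMeasurableSpace X]

lemma geom_core (u : ℕ → X) (M : ℕ) {ε : ℝ} (hε : 0 < ε)
    (μ μ' : Measure X) [IsProbabilityMeasure μ] [IsProbabilityMeasure μ']
    {B : Set X} (hB : MeasurableSet B)
    (hviol : μ' (thickening (ε/2) B) + ENNReal.ofReal (ε/2) < μ B)
    (hT : ENNReal.ofReal (1 - ε/4) ≤ μ (⋃ i ∈ Finset.range M, ball (u i) (ε/16))) :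
    ∃ t ∈ (Finset.range M).powerset,
      ε^2/32 ≤ ∫ x, testFn u ε t x ∂μ - ∫ x, testFn u ε t x ∂μ' := by
  classical
  set T : Set X := ⋃ i ∈ Finset.range M, ball (u i) (ε/16) with hTdef
  have hTopen : IsOpen T := isOpen_biUnion (fun i _ => isOpen_ball)
  have hTmble : MeasurableSet T := hTopen.measurableSet
  set A : Set X := B ∩ T with hAdef
  have hAmble : MeasurableSet A := hB.inter hTmble
  set t : Finset ℕ := (Finset.range M).filter (fun i => ∃ y ∈ A, dist y (u i) < ε/16) with htdef
  refine ⟨t, Finset.mem_powerset.mpr (Finset.filter_subset _ _), ?_⟩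
  set ψ := testFn u ε t with hψdef
  -- pointwise lower bound on A
  have hlow : ∀ x, A.indicator (fun _ => ε/8) x ≤ ψ x := by
    intro x
    by_cases hx : x ∈ A
    · rw [Set.indicator_of_mem hx]
      obtain ⟨i, hiM, hxi⟩ : ∃ i ∈ Finset.range M, x ∈ ball (u i) (ε/16) := by
        have hx2 := hx.2
        rw [hTdef] at hx2
        simpa only [Set.mem_iUnion, exists_prop] using hx2
      have hit : i ∈ t := by
        rw [htdef, Finset.mem_filter]
        exact ⟨hiM, ⟨x, hx, mem_ball.mp hxi⟩⟩
      exact testFn_ge u hε t hit (le_of_lt (mem_ball.mp hxi))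
    · rw [Set.indicator_of_notMem hx]
      exact testFn_nonneg u hε.le t x
  -- pointwise upper bound by the thickening of B
  have hup : ∀ x, ψ x ≤ (thickening (ε/2) B).indicator (fun _ => ε/8) x := by
    intro x
    by_cases hx : x ∈ thickening (ε/2) B
    · rw [Set.indicator_of_mem hx]
      exact testFn_le u ε t x
    · rw [Set.indicator_of_notMem hx]
      refine le_of_eq (testFn_eq_zero u hε.le t ?_)
      intro i hi
      by_contra hcon
      push_neg at hcon
      obtain ⟨-, y, hyA, hyi⟩ : i ∈ Finset.range M ∧ ∃ y ∈ A, dist y (u i) < ε/16 := by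
        rwa [htdef, Finset.mem_filter] at hi
      refine hx (mem_thickening_iff.mpr ⟨y, hyA.1, ?_⟩)
      calc dist x y ≤ dist x (u i) + dist (u i) y := dist_triangle _ _ _
        _ < ε/4 + ε/16 := by rw [dist_comm (u i) y]; exact add_lt_add hcon hyi
        _ < ε/2 := by linarith
  -- integral bounds
  have hψint : Integrable (fun x => ψ x) μ := ψ.integrable μ
  have hψint' : Integrable (fun x => ψ x) μ' := ψ.integrable μ'
  have hint1 : (ε/8) * (μ A).toReal ≤ ∫ x, ψ x ∂μ := by
    have := integral_mono ((integrable_const (ε/8)).indicator hAmble) hψint hlow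
    rwa [integral_indicator_const _ hAmble, smul_eq_mul, mul_comm] at this
  have hint2 : ∫ x, ψ x ∂μ' ≤ (ε/8) * (μ' (thickening (ε/2) B)).toReal := by
    have := integral_mono hψint'
      ((integrable_const (ε/8)).indicator isOpen_thickening.measurableSet) hup
    rwa [integral_indicator_const _ isOpen_thickening.measurableSet, smul_eq_mul, mul_comm] at this
  -- measure arithmetic
  have hμB1 : μ B ≠ ⊤ := measure_ne_top _ _
  have hTc : (μ Tᶜ).toReal ≤ ε/4 := by
    have h1 : μ Tᶜ = 1 - μ T := prob_compl_eq_one_sub hTmble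
    have h2 : 1 - ε/4 ≤ (μ T).toReal := by
      rcases le_or_gt (1 - ε/4) 0 with h | h
      · exact le_trans h ENNReal.toReal_nonneg
      · have := ENNReal.toReal_mono (measure_ne_top _ _) hT
        rwa [ENNReal.toReal_ofReal h.le] at this
    rw [h1, ENNReal.toReal_sub_of_le prob_le_one ENNReal.one_ne_top, ENNReal.toReal_one]
    linarith
  have h1 : (μ B).toReal - ε/4 ≤ (μ A).toReal := by
    have hle : μ B ≤ μ A + μ Tᶜ :=
      le_trans (measure_le_inter_add_diff μ B T)
        (add_le_add le_rfl (measure_mono (Set.diff_subset_compl B T)))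
    have := ENNReal.toReal_mono
      (ENNReal.add_ne_top.mpr ⟨measure_ne_top _ _, measure_ne_top _ _⟩) hle
    rw [ENNReal.toReal_add (measure_ne_top _ _) (measure_ne_top _ _)] at this
    linarith
  have h2 : (μ' (thickening (ε/2) B)).toReal ≤ (μ B).toReal - ε/2 := by
    have := ENNReal.toReal_mono hμB1 hviol.le
    rw [ENNReal.toReal_add (measure_ne_top _ _) ENNReal.ofReal_ne_top,
      ENNReal.toReal_ofReal (by positivity)] at this
    linarith
  have e8 : (0:ℝ) ≤ ε/8 := by positivity
  have k1 := mul_le_mul_of_nonneg_left h1 e8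
  have k2 := mul_le_mul_of_nonneg_left h2 e8
  nlinarith [hint1, hint2]

lemma geom_claim (u : ℕ → X) (M : ℕ) {ε : ℝ} (hε : 0 < ε)
    (μ μ' : Measure X) [IsProbabilityMeasure μ] [IsProbabilityMeasure μ']
    (hdist : ENNReal.ofReal (ε/2) < levyProkhorovEDist μ μ')
    (hTμ : ENNReal.ofReal (1 - ε/4) ≤ μ (⋃ i ∈ Finset.range M, ball (u i) (ε/16)))
    (hTμ' : ENNReal.ofReal (1 - ε/4) ≤ μ' (⋃ i ∈ Finset.range M, ball (u i) (ε/16))) :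
    ∃ t ∈ (Finset.range M).powerset,
      ε^2/32 ≤ |∫ x, testFn u ε t x ∂μ - ∫ x, testFn u ε t x ∂μ'| := by
  have hnot : ¬ (∀ (ε' : ℝ≥0∞) (B : Set X), ENNReal.ofReal (ε/2) < ε' → ε' < ⊤ →
      MeasurableSet B →
      μ B ≤ μ' (thickening ε'.toReal B) + ε' ∧ μ' B ≤ μ (thickening ε'.toReal B) + ε') :=
    fun hall => absurd (levyProkhorovEDist_le_of_forall μ μ' _ hall) (not_le.mpr hdist)
  simp only [not_forall] at hnot
  obtain ⟨ε', B, hlt, hfin', hBm, hfail⟩ := hnot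
  rw [not_and_or] at hfail
  have htR : (ENNReal.ofReal (ε/2)).toReal = ε/2 := ENNReal.toReal_ofReal (by positivity)
  rcases hfail with h | h
  · have h3 : μ' (thickening (ε/2) B) + ENNReal.ofReal (ε/2) < μ B := by
      by_contra hc
      rw [not_lt] at hc
      have hc' : μ B ≤ μ' (thickening (ENNReal.ofReal (ε/2)).toReal B) + ENNReal.ofReal (ε/2) := by
        rwa [htR]
      exact h (meas_le_of_le_of_forall_le_meas_thickening_add μ μ' hlt.le hc')
    obtain ⟨t, ht, hval⟩ := geom_core u M hε μ μ' hBm h3 hTμ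
    exact ⟨t, ht, le_trans hval (le_abs_self _)⟩
  · have h3 : μ (thickening (ε/2) B) + ENNReal.ofReal (ε/2) < μ' B := by
      by_contra hc
      rw [not_lt] at hc
      have hc' : μ' B ≤ μ (thickening (ENNReal.ofReal (ε/2)).toReal B) + ENNReal.ofReal (ε/2) := by
        rwa [htR]
      exact h (meas_le_of_le_of_forall_le_meas_thickening_add μ' μ hlt.le hc')
    obtain ⟨t, ht, hval⟩ := geom_core u M hε μ' μ hBm h3 hTμ'
    refine ⟨t, ht, ?_⟩
    rw [abs_sub_comm]
    exact le_trans hval (le_abs_self _)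


/-- Cutoff function: `1` on `T'`, `0` outside `thickening c T'`, values in `[0,1]`. -/
noncomputable def cutoff (T' : Set X) {c : ℝ} (hc : 0 < c) : BoundedContinuousFunction X ℝ :=
  BoundedContinuousFunction.ofNormedAddCommGroup
    (fun x => max 0 (1 - infDist x T' / c))
    (continuous_const.max (continuous_const.sub ((continuous_infDist_pt T').div_const c)))
    1
    (fun x => by
      rw [Real.norm_eq_abs, abs_le]
      have h1 : 0 ≤ infDist x T' / c := div_nonneg infDist_nonneg hc.le
      constructor
      · linarith [le_max_left (0:ℝ) (1 - infDist x T' / c)]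
      · rw [max_le_iff]
        constructor <;> linarith)

lemma cutoff_apply (T' : Set X) {c : ℝ} (hc : 0 < c) (x : X) :
    cutoff T' hc x = max 0 (1 - infDist x T' / c) := rfl

lemma cutoff_nonneg (T' : Set X) {c : ℝ} (hc : 0 < c) (x : X) : 0 ≤ cutoff T' hc x :=
  le_max_left _ _

lemma cutoff_le_one (T' : Set X) {c : ℝ} (hc : 0 < c) (x : X) : cutoff T' hc x ≤ 1 := by
  rw [cutoff_apply, max_le_iff]
  have h1 : 0 ≤ infDist x T' / c := div_nonneg infDist_nonneg hc.le
  constructor <;> linarith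

lemma cutoff_eq_one_of_mem (T' : Set X) {c : ℝ} (hc : 0 < c) {x : X} (hx : x ∈ T') :
    cutoff T' hc x = 1 := by
  rw [cutoff_apply, infDist_zero_of_mem hx, zero_div, sub_zero]
  exact max_eq_right zero_le_one

lemma exists_mem_of_cutoff_pos (T' : Set X) {c : ℝ} (hc : 0 < c) (hne : T'.Nonempty) {x : X}
    (hx : 0 < cutoff T' hc x) : ∃ y ∈ T', dist x y < c := by
  rw [cutoff_apply] at hx
  have h1 : infDist x T' / c < 1 := by
    by_contra hcon
    push_neg at hcon
    have : 1 - infDist x T' / c ≤ 0 := by linarith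
    rw [max_eq_left this] at hx
    exact lt_irrefl _ hx
  exact (infDist_lt_iff hne).mp (by rwa [div_lt_one hc] at h1)

/-- Integral of a `[0,1]`-valued function vanishing outside `T` is at most `μ T`. -/
lemma integral_le_meas {μ : Measure X} [IsProbabilityMeasure μ]
    {χ : BoundedContinuousFunction X ℝ} {T : Set X} (hT : MeasurableSet T)
    (h1 : ∀ x, χ x ≤ 1) (h0 : ∀ x, x ∉ T → χ x ≤ 0) :
    ∫ x, χ x ∂μ ≤ (μ T).toReal := by
  have hle : ∀ x, χ x ≤ T.indicator (fun _ => (1:ℝ)) x := by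
    intro x
    by_cases hx : x ∈ T
    · rw [Set.indicator_of_mem hx]; exact h1 x
    · rw [Set.indicator_of_notMem hx]; exact h0 x hx
  have := integral_mono (χ.integrable μ) ((integrable_const (1:ℝ)).indicator hT) hle
  rwa [integral_indicator_const _ hT, smul_eq_mul, mul_one] at this

/-- Integral of a nonnegative function that is `≥ 1` on `T'` is at least `μ T'`. -/
lemma meas_le_integral {μ : Measure X} [IsProbabilityMeasure μ]
    {χ : BoundedContinuousFunction X ℝ} {T' : Set X} (hT' : MeasurableSet T')
    (hnn : ∀ x, 0 ≤ χ x) (h1 : ∀ x, x ∈ T' → 1 ≤ χ x) :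
    (μ T').toReal ≤ ∫ x, χ x ∂μ := by
  have hle : ∀ x, T'.indicator (fun _ => (1:ℝ)) x ≤ χ x := by
    intro x
    by_cases hx : x ∈ T'
    · rw [Set.indicator_of_mem hx]; exact h1 x hx
    · rw [Set.indicator_of_notMem hx]; exact hnn x
  have := integral_mono ((integrable_const (1:ℝ)).indicator hT') (χ.integrable μ) hle
  rwa [integral_indicator_const _ hT', smul_eq_mul, mul_one] at this

/-- Markov-type bound for conditional expectations of `[0,1]`-valued functions with mean
close to `1`. -/
lemma markov_condexp {Ω : Type*} {m0 : MeasurableSpace Ω} (P : Measure Ω)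
    [IsProbabilityMeasure P] {m : MeasurableSpace Ω} (hm : m ≤ m0) {g : Ω → ℝ}
    (hgi : Integrable g P) (hg1 : g ≤ᵐ[P] fun _ => 1)
    {κ η : ℝ} (hη : 0 < η) (hκ0 : 0 ≤ κ) (hκ : 1 - κ ≤ ∫ ω, g ω ∂P) :
    P {ω | (P[g|m]) ω < 1 - η} ≤ ENNReal.ofReal (κ/η) := by
  have hh1 : (P[g|m]) ≤ᵐ[P] fun _ => (1:ℝ) := by
    have := condExp_mono (m := m) hgi (integrable_const (1:ℝ)) hg1
    rwa [condExp_const hm] at this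
  have hFnn : 0 ≤ᵐ[P] fun ω => 1 - (P[g|m]) ω := hh1.mono fun ω hω => by
    simp only [Pi.zero_apply]
    simpa using hω
  have hFi : Integrable (fun ω => 1 - (P[g|m]) ω) P :=
    (integrable_const (1:ℝ)).sub integrable_condExp
  have hmkv := mul_meas_ge_le_integral_of_nonneg hFnn hFi η
  have hint : ∫ ω, (1 - (P[g|m]) ω) ∂P ≤ κ := by
    rw [integral_sub (integrable_const (1:ℝ)) integrable_condExp, integral_condExp hm,
      integral_const]
    simp only [measure_univ, probReal_univ, smul_eq_mul, one_mul]
    linarith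
  have hsub : {ω | (P[g|m]) ω < 1 - η} ⊆ {ω | η ≤ 1 - (P[g|m]) ω} := by
    intro ω hω
    simp only [Set.mem_setOf_eq] at hω ⊢
    linarith
  have hPle : (P {ω | η ≤ 1 - (P[g|m]) ω}).toReal ≤ κ/η := by
    rw [le_div_iff₀ hη, mul_comm]
    exact le_trans hmkv hint
  calc P {ω | (P[g|m]) ω < 1 - η} ≤ P {ω | η ≤ 1 - (P[g|m]) ω} := measure_mono hsub
    _ ≤ ENNReal.ofReal (κ/η) :=
      (ENNReal.le_ofReal_iff_toReal_le (measure_ne_top _ _) (by positivity)).mpr hPle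

end CondDistribProofAux


open MeasureTheory Filter CondDistribProofAux Metric Set
open scoped NNReal ENNReal



open MeasureTheory Filter

/-- If conditional expectations w.r.t. sub-σ-fields `Eₙ` converge in `L²` to the
conditional expectation w.r.t. `E` (for every `L²` function), then for any
random variable `f` with values in a Polish metric space `X`, the conditional
distributions `P_{f|Eₙ}` converge to `P_{f|E}` in probability (as random
elements of `Prob(X)`, metrized by the Lévy–Prokhorov distance). -/
theorem condDistrib_continuous_in_sigma_field {Ω X : Type*} {m0 : MeasurableSpace Ω}
    (P : Measure Ω) [IsProbabilityMeasure P]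
    [MetricSpace X] [CompleteSpace X] [TopologicalSpace.SeparableSpace X]
    [MeasurableSpace X] [BorelSpace X]
    (E : MeasurableSpace Ω) (En : ℕ → MeasurableSpace Ω)
    (hE : E ≤ m0) (hEn : ∀ n, En n ≤ m0)
    (hconv : ∀ g : Ω → ℝ, MemLp g 2 P →
      Tendsto (fun n => eLpNorm (P[g | En n] - P[g | E]) 2 P) atTop (nhds 0))
    (f : Ω → X) (hf : AEMeasurable f P)
    (ν : Ω → ProbabilityMeasure X) (νn : ℕ → Ω → ProbabilityMeasure X)
    (hν : ∀ φ : BoundedContinuousFunction X ℝ,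
      (fun ω => ∫ x, φ x ∂(ν ω : Measure X)) =ᵐ[P] P[(fun ω => φ (f ω)) | E])
    (hνn : ∀ n, ∀ φ : BoundedContinuousFunction X ℝ,
      (fun ω => ∫ x, φ x ∂(νn n ω : Measure X)) =ᵐ[P] P[(fun ω => φ (f ω)) | En n]) :
    TendstoInMeasure P
      (fun n ω => (LevyProkhorov.toMeasureEquiv (α := ProbabilityMeasure X)).symm (νn n ω)) atTop
      (fun ω => (LevyProkhorov.toMeasureEquiv (α := ProbabilityMeasure X)).symm (ν ω)) := by
  classical
  -- Step A: convergence in measure of test integrals, for every bounded continuous function.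
  have stepA : ∀ φ : BoundedContinuousFunction X ℝ, TendstoInMeasure P
      (fun n ω => ∫ x, φ x ∂(νn n ω : Measure X)) atTop
      (fun ω => ∫ x, φ x ∂(ν ω : Measure X)) := by
    intro φ
    have hfm : AEStronglyMeasurable[m0] (fun ω => φ (f ω)) P :=
      (φ.continuous.measurable.comp_aemeasurable hf).aestronglyMeasurable
    have hmem : MemLp (fun ω => φ (f ω)) 2 P :=
      MemLp.of_bound hfm ‖φ‖ (Eventually.of_forall fun ω => φ.norm_coe_le_norm (f ω))
    have hbase : TendstoInMeasure P (fun n => P[(fun ω => φ (f ω))|En n]) atTop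
        (P[(fun ω => φ (f ω))|E]) :=
      tendstoInMeasure_of_tendsto_eLpNorm (by norm_num : (2:ℝ≥0∞) ≠ 0)
        (fun n => (stronglyMeasurable_condExp.mono (hEn n)).aestronglyMeasurable)
        (stronglyMeasurable_condExp.mono hE).aestronglyMeasurable
        (hconv _ hmem)
    exact hbase.congr (fun n => (hνn n φ).symm) (hν φ).symm
  -- the main estimate, for small ε
  have main : ∀ ε : ℝ, 0 < ε → ε ≤ 1/2 →
      Tendsto (fun n => P {ω | ε ≤
        dist ((LevyProkhorov.toMeasureEquiv (α := ProbabilityMeasure X)).symm (νn n ω))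
             ((LevyProkhorov.toMeasureEquiv (α := ProbabilityMeasure X)).symm (ν ω))}) atTop (nhds 0) := by
    intro ε hε hε2
    have hΩne : Nonempty Ω := by
      by_contra hcon
      rw [not_nonempty_iff] at hcon
      have h1 : P univ = 1 := measure_univ
      rw [show (univ : Set Ω) = ∅ from Set.univ_eq_empty_iff.mpr hcon, measure_empty] at h1
      exact zero_ne_one h1
    have hXne : Nonempty X := ⟨f hΩne.some⟩
    obtain ⟨u, hu⟩ := TopologicalSpace.exists_dense_seq X
    rw [ENNReal.tendsto_atTop_zero]
    intro θ hθ
    rcases eq_top_or_lt_top θ with hθtop | hθfin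
    · exact ⟨0, fun n _ => le_trans le_top hθtop.ge⟩
    set θ' : ℝ := min 1 θ.toReal with hθ'def
    have hθ'pos : 0 < θ' := lt_min one_pos (ENNReal.toReal_pos hθ.ne' hθfin.ne)
    have hθ'le1 : θ' ≤ 1 := min_le_left _ _
    have hθ'le : ENNReal.ofReal θ' ≤ θ := by
      calc ENNReal.ofReal θ' ≤ ENNReal.ofReal θ.toReal :=
            ENNReal.ofReal_le_ofReal (min_le_right _ _)
        _ = θ := ENNReal.ofReal_toReal hθfin.ne
    set κ : ℝ := (ε/4) * (θ'/8) with hκdef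
    have hκpos : 0 < κ := by positivity
    have hκlt : κ < 1 := by nlinarith
    set lawf := @Measure.map Ω X m0 _ f P with hlawdef
    haveI : IsProbabilityMeasure lawf := Measure.isProbabilityMeasure_map hf
    -- choose the finite collection of balls
    have hcov : ⋃ M : ℕ, ⋃ i ∈ Finset.range M, ball (u i) (ε/32) = univ := by
      ext x
      simp only [mem_univ, iff_true, mem_iUnion, exists_prop]
      obtain ⟨i, hi⟩ := (Metric.denseRange_iff.mp hu) x (ε/32) (by positivity)
      exact ⟨i+1, i, Finset.mem_range.mpr (Nat.lt_succ_self i), mem_ball.mpr hi⟩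
    have hmono : Monotone (fun M : ℕ => ⋃ i ∈ Finset.range M, ball (u i) (ε/32)) := by
      intro a b hab
      exact Set.biUnion_subset_biUnion_left
        (fun i hi => Finset.mem_range.mpr (lt_of_lt_of_le (Finset.mem_range.mp hi) hab))
    have htnd := tendsto_measure_iUnion_atTop (μ := lawf) hmono
    rw [show ⋃ M : ℕ, ⋃ i ∈ Finset.range M, ball (u i) (ε/32) = univ from hcov,
      measure_univ] at htnd
    have hM : ∃ M, ENNReal.ofReal (1 - κ) <
        lawf (⋃ i ∈ Finset.range M, ball (u i) (ε/32)) := by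
      have h1 : ENNReal.ofReal (1 - κ) < 1 := by
        rw [← ENNReal.ofReal_one]
        exact ENNReal.ofReal_lt_ofReal_iff_of_nonneg (by linarith) |>.mpr (by linarith)
      exact (htnd.eventually (lt_mem_nhds h1)).exists
    obtain ⟨M, hMlaw⟩ := hM
    set T' : Set X := ⋃ i ∈ Finset.range M, ball (u i) (ε/32) with hT'def
    set T : Set X := ⋃ i ∈ Finset.range M, ball (u i) (ε/16) with hTdef
    have hT'mble : MeasurableSet T' := (isOpen_biUnion fun i _ => isOpen_ball).measurableSet
    have hTmble : MeasurableSet T := (isOpen_biUnion fun i _ => isOpen_ball).measurableSet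
    have hT'ne : T'.Nonempty := by
      by_contra hcon
      rw [not_nonempty_iff_eq_empty] at hcon
      rw [hcon, measure_empty] at hMlaw
      exact absurd hMlaw (not_lt.mpr zero_le)
    have hc32 : (0:ℝ) < ε/32 := by positivity
    set χ := cutoff T' hc32 with hχdef
    -- χ vanishes outside T
    have hχT : ∀ x, x ∉ T → χ x ≤ 0 := by
      intro x hx
      by_contra hcon
      push_neg at hcon
      obtain ⟨y, hyT', hxy⟩ := exists_mem_of_cutoff_pos T' hc32 hT'ne hcon
      have hy2 := hyT'
      rw [hT'def] at hy2
      simp only [mem_iUnion, exists_prop] at hy2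
      obtain ⟨i, hiM, hyi⟩ := hy2
      refine hx ?_
      rw [hTdef]
      simp only [mem_iUnion, exists_prop]
      refine ⟨i, hiM, mem_ball.mpr ?_⟩
      calc dist x (u i) ≤ dist x y + dist y (u i) := dist_triangle _ _ _
        _ < ε/32 + ε/32 := add_lt_add hxy (mem_ball.mp hyi)
        _ = ε/16 := by ring
    -- the mean of χ ∘ f is at least 1 - κ
    have hχf_int : Integrable (fun ω => χ (f ω)) P := by
      rw [← memLp_one_iff_integrable]
      exact MemLp.of_bound ((χ.continuous.measurable.comp_aemeasurable hf).aestronglyMeasurable)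
        ‖χ‖ (Eventually.of_forall fun ω => χ.norm_coe_le_norm (f ω))
    have hEχ : 1 - κ ≤ ∫ ω, χ (f ω) ∂P := by
      have h1 : ∫ ω, χ (f ω) ∂P = ∫ x, χ x ∂lawf :=
        (integral_map hf χ.continuous.measurable.aestronglyMeasurable).symm
      rw [h1]
      have h2 : (lawf T').toReal ≤ ∫ x, χ x ∂lawf :=
        meas_le_integral hT'mble (cutoff_nonneg T' hc32)
          (fun x hx => (cutoff_eq_one_of_mem T' hc32 hx).ge)
      have h3 : 1 - κ ≤ (lawf T').toReal := by
        have := ENNReal.toReal_mono (measure_ne_top _ _) hMlaw.le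
        rwa [ENNReal.toReal_ofReal (by linarith)] at this
      linarith
    -- Markov bounds for the bad sets
    have hbadν : P {ω | ∫ x, χ x ∂(ν ω : Measure X) < 1 - ε/4} ≤ ENNReal.ofReal (θ'/8) := by
      have hcongr : P {ω | ∫ x, χ x ∂(ν ω : Measure X) < 1 - ε/4}
          = P {ω | (P[(fun ω => χ (f ω))|E]) ω < 1 - ε/4} :=
        measure_congr ((hν χ).mono fun ω hω => by
          change (_ < _ : Prop) = (_ < _)
          simpa using congrArg (fun y : ℝ => y < 1 - ε/4) hω)
      rw [hcongr]
      have := markov_condexp P hE hχf_int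
        (Eventually.of_forall fun ω => cutoff_le_one T' hc32 (f ω))
        (show (0:ℝ) < ε/4 by positivity) hκpos.le hEχ
      have heq : κ / (ε/4) = θ'/8 := by
        rw [hκdef]
        field_simp
      rwa [heq] at this
    have hbadνn : ∀ n, P {ω | ∫ x, χ x ∂(νn n ω : Measure X) < 1 - ε/4}
        ≤ ENNReal.ofReal (θ'/8) := by
      intro n
      have hcongr : P {ω | ∫ x, χ x ∂(νn n ω : Measure X) < 1 - ε/4}
          = P {ω | (P[(fun ω => χ (f ω))|En n]) ω < 1 - ε/4} :=
        measure_congr ((hνn n χ).mono fun ω hω => by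
          change (_ < _ : Prop) = (_ < _)
          simpa using congrArg (fun y : ℝ => y < 1 - ε/4) hω)
      rw [hcongr]
      have := markov_condexp P (hEn n) hχf_int
        (Eventually.of_forall fun ω => cutoff_le_one T' hc32 (f ω))
        (show (0:ℝ) < ε/4 by positivity) hκpos.le hEχ
      have heq : κ / (ε/4) = θ'/8 := by
        rw [hκdef]
        field_simp
      rwa [heq] at this
    -- eventual bounds for the finitely many test functions
    set δ₀ : ℝ := ε^2/32 with hδ₀def
    have hδ₀ : 0 < δ₀ := by positivity
    set pw := (Finset.range M).powerset with hpwdef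
    set ζ : ℝ≥0∞ := ENNReal.ofReal (θ'/2) / pw.card with hζdef
    have hζpos : 0 < ζ := ENNReal.div_pos (ENNReal.ofReal_pos.mpr (by positivity)).ne'
      (ENNReal.natCast_ne_top _)
    have hev : ∀ᶠ n in atTop, ∀ t ∈ pw, P {ω | δ₀ ≤
        dist (∫ x, testFn u ε t x ∂(νn n ω : Measure X))
             (∫ x, testFn u ε t x ∂(ν ω : Measure X))} < ζ :=
      (Finset.eventually_all pw).mpr fun t _ =>
        Tendsto.eventually_lt_const hζpos (tendstoInMeasure_iff_dist.mp (stepA (testFn u ε t)) δ₀ hδ₀)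
    obtain ⟨N, hN⟩ := eventually_atTop.mp hev
    refine ⟨N, fun n hn => ?_⟩
    -- inclusion into the bad sets and the test-discrepancy sets
    have hincl : {ω | ε ≤
        dist ((LevyProkhorov.toMeasureEquiv (α := ProbabilityMeasure X)).symm (νn n ω))
             ((LevyProkhorov.toMeasureEquiv (α := ProbabilityMeasure X)).symm (ν ω))} ⊆
        ({ω | ∫ x, χ x ∂(νn n ω : Measure X) < 1 - ε/4}
          ∪ {ω | ∫ x, χ x ∂(ν ω : Measure X) < 1 - ε/4}) ∪
        ⋃ t ∈ pw, {ω | δ₀ ≤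
          dist (∫ x, testFn u ε t x ∂(νn n ω : Measure X))
               (∫ x, testFn u ε t x ∂(ν ω : Measure X))} := by
      intro ω hω
      by_cases h1 : ∫ x, χ x ∂(νn n ω : Measure X) < 1 - ε/4
      · exact Or.inl (Or.inl h1)
      by_cases h2 : ∫ x, χ x ∂(ν ω : Measure X) < 1 - ε/4
      · exact Or.inl (Or.inr h2)
      push_neg at h1 h2
      right
      -- mass bounds on T
      have hm1 : ENNReal.ofReal (1 - ε/4) ≤ (νn n ω : Measure X) T := by
        have hint := integral_le_meas (μ := (νn n ω : Measure X)) hTmble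
          (cutoff_le_one T' hc32) hχT
        exact ENNReal.ofReal_le_of_le_toReal (by linarith)
      have hm2 : ENNReal.ofReal (1 - ε/4) ≤ (ν ω : Measure X) T := by
        have hint := integral_le_meas (μ := (ν ω : Measure X)) hTmble
          (cutoff_le_one T' hc32) hχT
        exact ENNReal.ofReal_le_of_le_toReal (by linarith)
      -- the Lévy-Prokhorov distance bound
      have hdist : ENNReal.ofReal (ε/2) <
          levyProkhorovEDist ((νn n ω : Measure X)) ((ν ω : Measure X)) := by
        have hω' : ε ≤ levyProkhorovDist ((νn n ω : Measure X)) ((ν ω : Measure X)) := by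
          have := hω
          rwa [Set.mem_setOf_eq, LevyProkhorov.dist_probabilityMeasure_def] at this
        rw [levyProkhorovDist] at hω'
        refine (ENNReal.ofReal_lt_iff_lt_toReal (by positivity)
          (levyProkhorovEDist_ne_top _ _)).mpr ?_
        linarith
      obtain ⟨t, htpw, hval⟩ := geom_claim u M hε
        ((νn n ω : Measure X)) ((ν ω : Measure X)) hdist hm1 hm2
      refine mem_iUnion₂.mpr ⟨t, htpw, ?_⟩
      simp only [mem_setOf_eq, Real.dist_eq]
      exact hval
    -- assemble the measure bound
    calc P {ω | ε ≤
        dist ((LevyProkhorov.toMeasureEquiv (α := ProbabilityMeasure X)).symm (νn n ω))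
             ((LevyProkhorov.toMeasureEquiv (α := ProbabilityMeasure X)).symm (ν ω))}
        ≤ P (({ω | ∫ x, χ x ∂(νn n ω : Measure X) < 1 - ε/4}
          ∪ {ω | ∫ x, χ x ∂(ν ω : Measure X) < 1 - ε/4}) ∪
          ⋃ t ∈ pw, {ω | δ₀ ≤
            dist (∫ x, testFn u ε t x ∂(νn n ω : Measure X))
                 (∫ x, testFn u ε t x ∂(ν ω : Measure X))}) := measure_mono hincl
      _ ≤ (P {ω | ∫ x, χ x ∂(νn n ω : Measure X) < 1 - ε/4}
          + P {ω | ∫ x, χ x ∂(ν ω : Measure X) < 1 - ε/4})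
          + ∑ t ∈ pw, P {ω | δ₀ ≤
            dist (∫ x, testFn u ε t x ∂(νn n ω : Measure X))
                 (∫ x, testFn u ε t x ∂(ν ω : Measure X))} :=
        le_trans (measure_union_le _ _)
          (add_le_add (measure_union_le _ _) (measure_biUnion_finset_le _ _))
      _ ≤ (ENNReal.ofReal (θ'/8) + ENNReal.ofReal (θ'/8)) + pw.card • ζ :=
        add_le_add (add_le_add (hbadνn n) hbadν)
          (Finset.sum_le_card_nsmul _ _ _ fun t ht => (hN n hn t ht).le)
      _ ≤ ENNReal.ofReal (θ'/4) + ENNReal.ofReal (θ'/2) := by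
        refine add_le_add ?_ ?_
        · rw [← ENNReal.ofReal_add (by positivity) (by positivity)]
          exact ENNReal.ofReal_le_ofReal (by linarith)
        · rw [nsmul_eq_mul, hζdef]
          exact ENNReal.mul_div_le
      _ ≤ θ := by
        rw [← ENNReal.ofReal_add (by positivity) (by positivity)]
        exact le_trans (ENNReal.ofReal_le_ofReal (by linarith)) hθ'le
  -- reduce the general case to small ε
  rw [tendstoInMeasure_iff_dist]
  intro ε hε
  have hmin : 0 < min ε (1/2) := lt_min hε (by norm_num)
  refine tendsto_of_tendsto_of_tendsto_of_le_of_le tendsto_const_nhds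
    (main _ hmin (min_le_right _ _)) (fun n => zero_le) (fun n => measure_mono ?_)
  intro ω hω
  simp only [Set.mem_setOf_eq] at hω ⊢
  exact le_trans (min_le_left _ _) hω
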